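/- arXiv:0901.1070 — 2 statements merged into one kernel-verified Lean document; each statement's English description precedes it below -/
import Mathlib

section
/- Theorem 1 (gauge invariance of the teleparallel Lagrangian): Let ϑ be a continuously differentiable coframe on U, let φ ∈ ℝ be a constant, and let f : U → ℂ be continuously differentiable. Define the transformed fields l̃ := l, m̃ := e^{iφ} m + f l, ñ := n + f e^{−iφ} m̄ + f̄ e^{iφ} m + |f|² l (the action of a general element of the gauge group H on the coframe). Then λ(l̃, m̃, ñ) = λ(l, m, n) at every point of U. -/
noncomputable section

open scoped Matrix

/-- Points of ℝ⁴. -/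
abbrev Pt : Type := Fin 4 → ℝ

/-- Partial derivative ∂_α of a function on ℝ⁴. -/
def pd {E : Type*} [NormedAddCommGroup E] [NormedSpace ℝ E]
    (α : Fin 4) (f : Pt → E) (x : Pt) : E :=
  fderiv ℝ f x (Pi.single α 1)

/-- o_{jk} = o^{jk} = diag(1,-1,-1,-1). -/
def oM : Fin 4 → Fin 4 → ℝ := fun j k => if j = k then (if j = 0 then 1 else -1) else 0

/-- Totally antisymmetric symbol, ε_{0123} = 1. -/
def eps (a b c d : Fin 4) : ℝ :=
  ∑ σ : Equiv.Perm (Fin 4),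
    if σ 0 = a ∧ σ 1 = b ∧ σ 2 = c ∧ σ 3 = d then ((Equiv.Perm.sign σ : ℤ) : ℝ) else 0

/-- Determinant det(ϑ^j_α) of a coframe. -/
def cofDet (ϑ : Fin 4 → Pt → Fin 4 → ℝ) (x : Pt) : ℝ :=
  Matrix.det (Matrix.of fun j α => ϑ j x α)

/-- l := ϑ⁰ + ϑ³. -/
def lC (ϑ : Fin 4 → Pt → Fin 4 → ℝ) (x : Pt) (α : Fin 4) : ℂ :=
  (ϑ 0 x α : ℂ) + (ϑ 3 x α : ℂ)

/-- m := ϑ¹ + iϑ². -/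
def mC (ϑ : Fin 4 → Pt → Fin 4 → ℝ) (x : Pt) (α : Fin 4) : ℂ :=
  (ϑ 1 x α : ℂ) + Complex.I * (ϑ 2 x α : ℂ)

/-- n := ϑ⁰ - ϑ³. -/
def nC (ϑ : Fin 4 → Pt → Fin 4 → ℝ) (x : Pt) (α : Fin 4) : ℂ :=
  (ϑ 0 x α : ℂ) - (ϑ 3 x α : ℂ)

/-- The teleparallel Lagrangian density
λ(l,m,n) := (1/6) ε^{αβγδ} l_α (n_β ∂_γ l_δ − m̄_β ∂_γ m_δ − m_β ∂_γ m̄_δ). -/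
def lam (l m n : Pt → Fin 4 → ℂ) (x : Pt) : ℂ :=
  (1/6 : ℂ) * ∑ α : Fin 4, ∑ β : Fin 4, ∑ γ : Fin 4, ∑ δ : Fin 4,
    (eps α β γ δ : ℂ) * l x α *
      (n x β * pd γ (fun y => l y δ) x
        - (starRingEnd ℂ) (m x β) * pd γ (fun y => m y δ) x
        - m x β * pd γ (fun y => (starRingEnd ℂ) (m y δ)) x)

/-- (du)_{αβ} := ∂_α u_β − ∂_β u_α. -/
def dcov (u : Pt → Fin 4 → ℝ) (α β : Fin 4) (x : Pt) : ℝ :=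
  pd α (fun y => u y β) x - pd β (fun y => u y α) x

/-- Axial torsion T^ax(ϑ)_{αβγ}. -/
def Tax (ϑ : Fin 4 → Pt → Fin 4 → ℝ) (α β γ : Fin 4) (x : Pt) : ℝ :=
  (1/3 : ℝ) * ∑ j : Fin 4, ∑ k : Fin 4, oM j k *
    (ϑ j x α * dcov (ϑ k) β γ x + ϑ j x β * dcov (ϑ k) γ α x + ϑ j x γ * dcov (ϑ k) α β x)

/-- Metric g_{αβ} := o_{jk} ϑ^j_α ϑ^k_β. -/
def gmat (ϑ : Fin 4 → Pt → Fin 4 → ℝ) (x : Pt) : Matrix (Fin 4) (Fin 4) ℝ :=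
  Matrix.of fun α β => ∑ j : Fin 4, ∑ k : Fin 4, oM j k * ϑ j x α * ϑ k x β

/-- Inverse metric g^{αβ}. -/
def ginv (ϑ : Fin 4 → Pt → Fin 4 → ℝ) (x : Pt) : Matrix (Fin 4) (Fin 4) ℝ :=
  (gmat ϑ x)⁻¹

/-- Christoffel symbols Γ^β_{αγ}. -/
def Chr (ϑ : Fin 4 → Pt → Fin 4 → ℝ) (β α γ : Fin 4) (x : Pt) : ℝ :=
  (1/2 : ℝ) * ∑ δ : Fin 4, ginv ϑ x β δ *
    (pd α (fun y => gmat ϑ y γ δ) x + pd γ (fun y => gmat ϑ y α δ) x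
      - pd δ (fun y => gmat ϑ y α γ) x)

/-- Levi-Civita covariant derivative ∇_α u_β of a complex covector field. -/
def covC (ϑ : Fin 4 → Pt → Fin 4 → ℝ) (u : Pt → Fin 4 → ℂ) (α β : Fin 4) (x : Pt) : ℂ :=
  pd α (fun y => u y β) x - ∑ γ : Fin 4, (Chr ϑ γ α β x : ℂ) * u x γ

/-- Levi-Civita covariant derivative ∇_γ F_{αβ} of a complex 2-form. -/
def covF (ϑ : Fin 4 → Pt → Fin 4 → ℝ) (F : Pt → Fin 4 → Fin 4 → ℂ) (γ α β : Fin 4) (x : Pt) : ℂ :=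
  pd γ (fun y => F y α β) x - ∑ δ : Fin 4, (Chr ϑ δ γ α x : ℂ) * F x δ β
    - ∑ δ : Fin 4, (Chr ϑ δ γ β x : ℂ) * F x α δ

/-- The 2-form (l∧m)_{αβ}. -/
def lmForm (ϑ : Fin 4 → Pt → Fin 4 → ℝ) (x : Pt) (α β : Fin 4) : ℂ :=
  lC ϑ x α * mC ϑ x β - lC ϑ x β * mC ϑ x α

/-- The Griffiths–Newing covector v_α := ∇^β (l∧m)_{αβ} − m^β ∇_α l_β. -/
def vGN (ϑ : Fin 4 → Pt → Fin 4 → ℝ) (α : Fin 4) (x : Pt) : ℂ :=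
  (∑ β : Fin 4, ∑ γ : Fin 4, (ginv ϑ x β γ : ℂ) * covF ϑ (fun y a b => lmForm ϑ y a b) γ α β x)
  - ∑ β : Fin 4, ∑ γ : Fin 4, (ginv ϑ x β γ : ℂ) * mC ϑ x γ * covC ϑ (fun y b => lC ϑ y b) α β x

/-- l^α := g^{αβ} l_β. -/
def lup (ϑ : Fin 4 → Pt → Fin 4 → ℝ) (x : Pt) (α : Fin 4) : ℂ :=
  ∑ β : Fin 4, (ginv ϑ x α β : ℂ) * lC ϑ x β

/-- Divergence ∇_α l^α := ∂_α l^α + Γ^α_{αγ} l^γ. -/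
def divl (ϑ : Fin 4 → Pt → Fin 4 → ℝ) (x : Pt) : ℂ :=
  ∑ α : Fin 4, (pd α (fun y => lup ϑ y α) x
    + ∑ γ : Fin 4, (Chr ϑ α α γ x : ℂ) * lup ϑ x γ)

/-- Components of the 4-form L_tele(ϑ) = l ∧ T^ax. -/
def LteleForm (ϑ : Fin 4 → Pt → Fin 4 → ℝ) (α β γ δ : Fin 4) (x : Pt) : ℂ :=
  lC ϑ x α * (Tax ϑ β γ δ x : ℂ) - lC ϑ x β * (Tax ϑ α γ δ x : ℂ)
    + lC ϑ x γ * (Tax ϑ α β δ x : ℂ) - lC ϑ x δ * (Tax ϑ α β γ x : ℂ)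

/-- Hodge star of a complex 4-form: ★F := (1/24) √|det g| F^{αβγδ} ε_{αβγδ}. -/
def star4C (ϑ : Fin 4 → Pt → Fin 4 → ℝ) (F : Fin 4 → Fin 4 → Fin 4 → Fin 4 → ℂ) (x : Pt) : ℂ :=
  (1/24 : ℂ) * (cofDet ϑ x : ℂ) *
    ∑ α : Fin 4, ∑ β : Fin 4, ∑ γ : Fin 4, ∑ δ : Fin 4,
      ∑ α' : Fin 4, ∑ β' : Fin 4, ∑ γ' : Fin 4, ∑ δ' : Fin 4,
        (ginv ϑ x α α' : ℂ) * (ginv ϑ x β β' : ℂ) * (ginv ϑ x γ γ' : ℂ) * (ginv ϑ x δ δ' : ℂ) *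
          F α' β' γ' δ' * (eps α β γ δ : ℂ)

/-- Hodge star of a real 4-form. -/
def star4 (ϑ : Fin 4 → Pt → Fin 4 → ℝ) (F : Fin 4 → Fin 4 → Fin 4 → Fin 4 → ℝ) (x : Pt) : ℝ :=
  (1/24 : ℝ) * cofDet ϑ x *
    ∑ α : Fin 4, ∑ β : Fin 4, ∑ γ : Fin 4, ∑ δ : Fin 4,
      ∑ α' : Fin 4, ∑ β' : Fin 4, ∑ γ' : Fin 4, ∑ δ' : Fin 4,
        ginv ϑ x α α' * ginv ϑ x β β' * ginv ϑ x γ γ' * ginv ϑ x δ δ' *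
          F α' β' γ' δ' * eps α β γ δ

/-- ★L_tele(ϑ). -/
def starLtele (ϑ : Fin 4 → Pt → Fin 4 → ℝ) (x : Pt) : ℂ :=
  star4C ϑ (fun α β γ δ => LteleForm ϑ α β γ δ x) x

section GaugeAux

lemma pd_add' {u v : Pt → ℂ} {γ : Fin 4} {x : Pt} (hu : DifferentiableAt ℝ u x)
    (hv : DifferentiableAt ℝ v x) :
    pd γ (fun y => u y + v y) x = pd γ u x + pd γ v x := by
  unfold pd; rw [fderiv_fun_add hu hv]; simp

lemma pd_const_mul' {u : Pt → ℂ} {γ : Fin 4} {x : Pt} (c : ℂ) (hu : DifferentiableAt ℝ u x) :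
    pd γ (fun y => c * u y) x = c * pd γ u x := by
  unfold pd; rw [fderiv_const_mul hu c]; simp

lemma pd_mul' {u v : Pt → ℂ} {γ : Fin 4} {x : Pt} (hu : DifferentiableAt ℝ u x)
    (hv : DifferentiableAt ℝ v x) :
    pd γ (fun y => u y * v y) x = pd γ u x * v x + u x * pd γ v x := by
  unfold pd; rw [fderiv_fun_mul hu hv]; simp; ring

lemma pd_conj' {u : Pt → ℂ} {γ : Fin 4} {x : Pt} (hu : DifferentiableAt ℝ u x) :
    pd γ (fun y => (starRingEnd ℂ) (u y)) x = (starRingEnd ℂ) (pd γ u x) := by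
  unfold pd
  have h : fderiv ℝ (fun y => (Complex.conjCLE : ℂ ≃L[ℝ] ℂ) (u y)) x
      = ((fderiv ℝ (Complex.conjCLE : ℂ ≃L[ℝ] ℂ) (u x)).comp (fderiv ℝ u x)) :=
    fderiv_comp x (Complex.conjCLE.differentiableAt) hu
  simp only [ContinuousLinearEquiv.fderiv] at h
  have h2 : (fun y => (starRingEnd ℂ) (u y)) = fun y => (Complex.conjCLE : ℂ ≃L[ℝ] ℂ) (u y) := rfl
  rw [h2, h]; rfl

lemma eps_swap12 (a b c d : Fin 4) : eps b a c d = - eps a b c d := by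
  unfold eps
  rw [← Finset.sum_neg_distrib]
  refine Fintype.sum_equiv (Equiv.mulRight (Equiv.swap (0:Fin 4) 1)) _ _ ?_
  intro σ
  simp only [Equiv.coe_mulRight, Equiv.Perm.mul_apply, Equiv.swap_apply_left,
    Equiv.swap_apply_right, Equiv.Perm.sign_mul, Equiv.Perm.sign_swap (by decide : (0:Fin 4) ≠ 1)]
  have h2 : Equiv.swap (0:Fin 4) 1 2 = 2 := by decide
  have h3 : Equiv.swap (0:Fin 4) 1 3 = 3 := by decide
  rw [h2, h3]
  by_cases h : σ 0 = b ∧ σ 1 = a ∧ σ 2 = c ∧ σ 3 = d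
  · rw [if_pos h, if_pos ⟨h.2.1, h.1, h.2.2⟩]; push_cast; ring
  · rw [if_neg h, if_neg (by tauto)]; ring

lemma eps_swap14 (a b c d : Fin 4) : eps d b c a = - eps a b c d := by
  unfold eps
  rw [← Finset.sum_neg_distrib]
  refine Fintype.sum_equiv (Equiv.mulRight (Equiv.swap (0:Fin 4) 3)) _ _ ?_
  intro σ
  simp only [Equiv.coe_mulRight, Equiv.Perm.mul_apply, Equiv.swap_apply_left,
    Equiv.swap_apply_right, Equiv.Perm.sign_mul, Equiv.Perm.sign_swap (by decide : (0:Fin 4) ≠ 3)]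
  have h2 : Equiv.swap (0:Fin 4) 3 1 = 1 := by decide
  have h3 : Equiv.swap (0:Fin 4) 3 2 = 2 := by decide
  rw [h2, h3]
  by_cases h : σ 0 = d ∧ σ 1 = b ∧ σ 2 = c ∧ σ 3 = a
  · rw [if_pos h, if_pos ⟨h.2.2.2, h.2.1, h.2.2.1, h.1⟩]; push_cast; ring
  · rw [if_neg h, if_neg (by tauto)]; ring

lemma sum4_reindex12 (g : Fin 4 → Fin 4 → Fin 4 → Fin 4 → ℂ) :
    (∑ a : Fin 4, ∑ b : Fin 4, ∑ c : Fin 4, ∑ d : Fin 4, g a b c d)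
      = ∑ a : Fin 4, ∑ b : Fin 4, ∑ c : Fin 4, ∑ d : Fin 4, g b a c d :=
  Finset.sum_comm

lemma sum4_reindex14 (g : Fin 4 → Fin 4 → Fin 4 → Fin 4 → ℂ) :
    (∑ a : Fin 4, ∑ b : Fin 4, ∑ c : Fin 4, ∑ d : Fin 4, g a b c d)
      = ∑ a : Fin 4, ∑ b : Fin 4, ∑ c : Fin 4, ∑ d : Fin 4, g d b c a := by
  have h := Fintype.sum_equiv
    (⟨fun p => (p.2.2.2, p.2.1, p.2.2.1, p.1), fun p => (p.2.2.2, p.2.1, p.2.2.1, p.1),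
      fun p => rfl, fun p => rfl⟩ :
      (Fin 4 × Fin 4 × Fin 4 × Fin 4) ≃ (Fin 4 × Fin 4 × Fin 4 × Fin 4))
    (fun p : Fin 4 × Fin 4 × Fin 4 × Fin 4 => g p.1 p.2.1 p.2.2.1 p.2.2.2)
    (fun p : Fin 4 × Fin 4 × Fin 4 × Fin 4 => g p.2.2.2 p.2.1 p.2.2.1 p.1)
    (fun p => rfl)
  simpa [Fintype.sum_prod_type] using h

lemma sum_eps_zero12 (X : Fin 4 → Fin 4 → Fin 4 → Fin 4 → ℂ)
    (h : ∀ a b c d, X a b c d = X b a c d) :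
    (∑ a : Fin 4, ∑ b : Fin 4, ∑ c : Fin 4, ∑ d : Fin 4, (eps a b c d : ℂ) * X a b c d) = 0 := by
  have h2 := sum4_reindex12 (fun a b c d => (eps a b c d : ℂ) * X a b c d)
  have h3 : (∑ a : Fin 4, ∑ b : Fin 4, ∑ c : Fin 4, ∑ d : Fin 4,
      (eps b a c d : ℂ) * X b a c d)
      = -∑ a : Fin 4, ∑ b : Fin 4, ∑ c : Fin 4, ∑ d : Fin 4, (eps a b c d : ℂ) * X a b c d := by
    simp only [← Finset.sum_neg_distrib]
    refine Finset.sum_congr rfl fun a _ => Finset.sum_congr rfl fun b _ =>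
      Finset.sum_congr rfl fun c _ => Finset.sum_congr rfl fun d _ => ?_
    rw [eps_swap12, ← h]; push_cast; ring
  rw [h3] at h2
  linear_combination (1/2 : ℂ) * h2

lemma sum_eps_zero14 (X : Fin 4 → Fin 4 → Fin 4 → Fin 4 → ℂ)
    (h : ∀ a b c d, X a b c d = X d b c a) :
    (∑ a : Fin 4, ∑ b : Fin 4, ∑ c : Fin 4, ∑ d : Fin 4, (eps a b c d : ℂ) * X a b c d) = 0 := by
  have h2 := sum4_reindex14 (fun a b c d => (eps a b c d : ℂ) * X a b c d)
  have h3 : (∑ a : Fin 4, ∑ b : Fin 4, ∑ c : Fin 4, ∑ d : Fin 4,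
      (eps d b c a : ℂ) * X d b c a)
      = -∑ a : Fin 4, ∑ b : Fin 4, ∑ c : Fin 4, ∑ d : Fin 4, (eps a b c d : ℂ) * X a b c d := by
    simp only [← Finset.sum_neg_distrib]
    refine Finset.sum_congr rfl fun a _ => Finset.sum_congr rfl fun b _ =>
      Finset.sum_congr rfl fun c _ => Finset.sum_congr rfl fun d _ => ?_
    rw [eps_swap14, ← h]; push_cast; ring
  rw [h3] at h2
  linear_combination (1/2 : ℂ) * h2

end GaugeAux

/-- Theorem 1 of the paper: the teleparallel Lagrangian density is invariant under the
action of the gauge group H: l̃ := l, m̃ := e^{iφ} m + f l,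
ñ := n + f e^{−iφ} m̄ + f̄ e^{iφ} m + |f|² l. -/
theorem weyl_teleparallel_gauge_invariance
    (U : Set Pt) (hU : IsOpen U) (ϑ : Fin 4 → Pt → Fin 4 → ℝ)
    (hreg : ∀ j, ContDiffOn ℝ 1 (ϑ j) U)
    (hdet : ∀ x ∈ U, 0 < cofDet ϑ x)
    (φ : ℝ) (f : Pt → ℂ) (hf : ContDiffOn ℝ 1 f U) :
    ∀ x ∈ U,
      lam (fun y α => lC ϑ y α)
        (fun y α => Complex.exp (Complex.I * φ) * mC ϑ y α + f y * lC ϑ y α)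
        (fun y α => nC ϑ y α
          + f y * Complex.exp (-(Complex.I * φ)) * (starRingEnd ℂ) (mC ϑ y α)
          + (starRingEnd ℂ) (f y) * Complex.exp (Complex.I * φ) * mC ϑ y α
          + (Complex.normSq (f y) : ℂ) * lC ϑ y α) x
      = lam (fun y α => lC ϑ y α) (fun y α => mC ϑ y α) (fun y α => nC ϑ y α) x := by
  intro x hx
  have hmem : U ∈ nhds x := hU.mem_nhds hx
  have hθ : ∀ j α, DifferentiableAt ℝ (fun y => ϑ j y α) x := fun j α =>
    differentiableAt_pi.mp (((hreg j).contDiffAt hmem).differentiableAt one_ne_zero) α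
  have hfx : DifferentiableAt ℝ f x := (hf.contDiffAt hmem).differentiableAt one_ne_zero
  have hl : ∀ δ, DifferentiableAt ℝ (fun y => lC ϑ y δ) x := by
    intro δ
    simp only [lC]
    exact (Complex.ofRealCLM.differentiableAt.comp x (hθ 0 δ)).add
      (Complex.ofRealCLM.differentiableAt.comp x (hθ 3 δ))
  have hm : ∀ δ, DifferentiableAt ℝ (fun y => mC ϑ y δ) x := by
    intro δ
    simp only [mC]
    exact (Complex.ofRealCLM.differentiableAt.comp x (hθ 1 δ)).add
      (((Complex.ofRealCLM.differentiableAt.comp x (hθ 2 δ))).const_mul Complex.I)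
  set E : ℂ := Complex.exp (Complex.I * ↑φ) with hE
  have hE0 : E ≠ 0 := Complex.exp_ne_zero _
  have hEneg : Complex.exp (-(Complex.I * ↑φ)) = E⁻¹ := by rw [hE, Complex.exp_neg]
  have hconjE : (starRingEnd ℂ) E = E⁻¹ := by
    rw [hE, ← Complex.exp_conj, map_mul, Complex.conj_I, Complex.conj_ofReal, neg_mul,
      Complex.exp_neg]
  have hlconj : ∀ (y : Pt) (a : Fin 4), (starRingEnd ℂ) (lC ϑ y a) = lC ϑ y a := by
    intro y a; simp [lC, Complex.conj_ofReal]
  have hDL : ∀ γ δ, (starRingEnd ℂ) (pd γ (fun y => lC ϑ y δ) x) =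
      pd γ (fun y => lC ϑ y δ) x := by
    intro γ δ
    rw [← pd_conj' (hl δ)]
    congr 1
    funext y
    exact hlconj y δ
  have hpdm : ∀ γ δ, pd γ (fun y => E * mC ϑ y δ + f y * lC ϑ y δ) x
      = E * pd γ (fun y => mC ϑ y δ) x + pd γ f x * lC ϑ x δ
        + f x * pd γ (fun y => lC ϑ y δ) x := by
    intro γ δ
    rw [pd_add' ((hm δ).const_mul E) (hfx.fun_mul (hl δ)), pd_const_mul' E (hm δ),
      pd_mul' hfx (hl δ)]
    ring
  have hpdmc : ∀ γ δ, pd γ (fun y => (starRingEnd ℂ) (E * mC ϑ y δ + f y * lC ϑ y δ)) x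
      = E⁻¹ * (starRingEnd ℂ) (pd γ (fun y => mC ϑ y δ) x)
        + (starRingEnd ℂ) (pd γ f x) * lC ϑ x δ
        + (starRingEnd ℂ) (f x) * pd γ (fun y => lC ϑ y δ) x := by
    intro γ δ
    rw [pd_conj' (((hm δ).const_mul E).fun_add (hfx.fun_mul (hl δ))), hpdm γ δ]
    simp only [map_add, map_mul, hconjE, hlconj, hDL]
  have hpdcm : ∀ γ δ, pd γ (fun y => (starRingEnd ℂ) (mC ϑ y δ)) x
      = (starRingEnd ℂ) (pd γ (fun y => mC ϑ y δ) x) := fun γ δ => pd_conj' (hm δ)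
  simp only [lam]
  congr 1
  have key : ∀ a b c d : Fin 4,
      (eps a b c d : ℂ) * lC ϑ x a *
        ((nC ϑ x b + f x * Complex.exp (-(Complex.I * ↑φ)) * (starRingEnd ℂ) (mC ϑ x b)
            + (starRingEnd ℂ) (f x) * E * mC ϑ x b
            + (Complex.normSq (f x) : ℂ) * lC ϑ x b) * pd c (fun y => lC ϑ y d) x
          - (starRingEnd ℂ) (E * mC ϑ x b + f x * lC ϑ x b) *
              pd c (fun y => E * mC ϑ y d + f y * lC ϑ y d) x
          - (E * mC ϑ x b + f x * lC ϑ x b) *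
              pd c (fun y => (starRingEnd ℂ) (E * mC ϑ y d + f y * lC ϑ y d)) x)
      = (eps a b c d : ℂ) * lC ϑ x a *
          (nC ϑ x b * pd c (fun y => lC ϑ y d) x
            - (starRingEnd ℂ) (mC ϑ x b) * pd c (fun y => mC ϑ y d) x
            - mC ϑ x b * pd c (fun y => (starRingEnd ℂ) (mC ϑ y d)) x)
        + (eps a b c d : ℂ) * (lC ϑ x a * lC ϑ x d *
            (-(E⁻¹ * (starRingEnd ℂ) (mC ϑ x b) * pd c f x)
              - E * mC ϑ x b * (starRingEnd ℂ) (pd c f x)))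
        + (eps a b c d : ℂ) * (lC ϑ x a * lC ϑ x b *
            (-((starRingEnd ℂ) (f x) * E * pd c (fun y => mC ϑ y d) x)
              - f x * E⁻¹ * (starRingEnd ℂ) (pd c (fun y => mC ϑ y d) x)
              - (starRingEnd ℂ) (f x) * pd c f x * lC ϑ x d
              - f x * (starRingEnd ℂ) (pd c f x) * lC ϑ x d
              - f x * (starRingEnd ℂ) (f x) * pd c (fun y => lC ϑ y d) x)) := by
    intro a b c d
    rw [hpdm c d, hpdmc c d, hpdcm c d, hEneg, ← Complex.mul_conj]
    simp only [map_add, map_mul, hconjE, hlconj]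
    field_simp
    ring
  refine Eq.trans (Finset.sum_congr rfl fun a _ => Finset.sum_congr rfl fun b _ =>
    Finset.sum_congr rfl fun c _ => Finset.sum_congr rfl fun d _ => key a b c d) ?_
  simp only [Finset.sum_add_distrib]
  have hT1 : (∑ a : Fin 4, ∑ b : Fin 4, ∑ c : Fin 4, ∑ d : Fin 4,
      (eps a b c d : ℂ) * (lC ϑ x a * lC ϑ x d *
        (-(E⁻¹ * (starRingEnd ℂ) (mC ϑ x b) * pd c f x)
          - E * mC ϑ x b * (starRingEnd ℂ) (pd c f x)))) = 0 := by
    refine sum_eps_zero14 _ fun a b c d => by ring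
  have hT2 : (∑ a : Fin 4, ∑ b : Fin 4, ∑ c : Fin 4, ∑ d : Fin 4,
      (eps a b c d : ℂ) * (lC ϑ x a * lC ϑ x b *
        (-((starRingEnd ℂ) (f x) * E * pd c (fun y => mC ϑ y d) x)
          - f x * E⁻¹ * (starRingEnd ℂ) (pd c (fun y => mC ϑ y d) x)
          - (starRingEnd ℂ) (f x) * pd c f x * lC ϑ x d
          - f x * (starRingEnd ℂ) (pd c f x) * lC ϑ x d
          - f x * (starRingEnd ℂ) (f x) * pd c (fun y => lC ϑ y d) x))) = 0 := by
    refine sum_eps_zero12 _ fun a b c d => by ring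
  rw [hT1, hT2, add_zero, add_zero]
end
end

section
/- Conformal covariance of axial torsion: for every continuously differentiable coframe ϑ on U and every continuously differentiable function h : U → ℝ, the rescaled coframe ϑ̃^j := e^h ϑ^j satisfies T^ax(ϑ̃)_{αβγ} = e^{2h} T^ax(ϑ)_{αβγ} at every point of U; in particular no derivatives of h appear. -/
noncomputable section

open scoped Matrix

lemma pd_exp_mul (h f : Pt → ℝ) (x : Pt) (α : Fin 4)
    (hh : DifferentiableAt ℝ h x) (hf : DifferentiableAt ℝ f x) :
    pd α (fun y => Real.exp (h y) * f y) x
      = Real.exp (h x) * pd α f x + Real.exp (h x) * pd α h x * f x := by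
  unfold pd
  rw [fderiv_fun_mul hh.exp hf, fderiv_exp hh]
  simp [mul_comm, mul_assoc, mul_left_comm]

set_option maxHeartbeats 1600000 in
/-- Conformal covariance of axial torsion: ϑ̃^j := e^h ϑ^j satisfies
T^ax(ϑ̃)_{αβγ} = e^{2h} T^ax(ϑ)_{αβγ}. -/
theorem axial_torsion_conformal_covariance
    (U : Set Pt) (hU : IsOpen U) (ϑ : Fin 4 → Pt → Fin 4 → ℝ)
    (hreg : ∀ j, ContDiffOn ℝ 1 (ϑ j) U)
    (hdet : ∀ x ∈ U, 0 < cofDet ϑ x)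
    (h : Pt → ℝ) (hh : ContDiffOn ℝ 1 h U) :
    ∀ x ∈ U, ∀ α β γ : Fin 4,
      Tax (fun j y δ => Real.exp (h y) * ϑ j y δ) α β γ x
        = Real.exp (2 * h x) * Tax ϑ α β γ x := by
  intro x hx α β γ
  have hhd : DifferentiableAt ℝ h x := (hh.contDiffAt (hU.mem_nhds hx)).differentiableAt one_ne_zero
  have hϑ : ∀ j δ, DifferentiableAt ℝ (fun y => ϑ j y δ) x := fun j δ =>
    ((ContinuousLinearMap.proj δ : (Fin 4 → ℝ) →L[ℝ] ℝ).differentiableAt).comp x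
      (((hreg j).contDiffAt (hU.mem_nhds hx)).differentiableAt one_ne_zero)
  have key : ∀ (k a b : Fin 4),
      dcov (fun y δ => Real.exp (h y) * ϑ k y δ) a b x
        = Real.exp (h x) * dcov (ϑ k) a b x
          + Real.exp (h x) * (pd a h x * ϑ k x b - pd b h x * ϑ k x a) := by
    intro k a b
    unfold dcov
    rw [pd_exp_mul h _ x a hhd (hϑ k b), pd_exp_mul h _ x b hhd (hϑ k a)]
    ring
  unfold Tax
  simp only [key]
  rw [show Real.exp (2 * h x) = Real.exp (h x) * Real.exp (h x) by
    rw [two_mul, Real.exp_add]]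
  simp only [Fin.sum_univ_four, oM, Fin.reduceEq, reduceIte]
  ring
end
end
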